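/- Suppose g : E → ℝ → E satisfies the one-sided Lipschitz condition with constant rate γ > 0 (with respect to ‖·‖_P) on [0, ∞). Let h > 0, let x* : ℝ → E satisfy g (x* t) t = 0 for all t ≥ 0, and suppose ‖x* (k·h) − x* ((k−1)·h)‖_P ≤ ρ for all k ≥ 1, where ρ ≥ 0. Let y : ℕ → E satisfy the implicit Euler recursion y (k+1) = y k + h • g (y (k+1)) ((k+1)·h) for all k. Then for every k ≥ 1, ‖y k − x* (k·h)‖_P ≤ (1 + h·γ)^(−k) · ‖y 0 − x* 0‖_P + ρ · ∑_{m=1}^{k} (1 + h·γ)^(−m), and moreover limsup_{k→∞} ‖y k − x* (k·h)‖_P ≤ ρ/(h·γ). -/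

import Mathlib

open Finset Filter

/-- Weighted inner product `⟪u, P.mulVec v⟫` on Euclidean space. -/
noncomputable def wip {n : ℕ} (P : Matrix (Fin n) (Fin n) ℝ)
    (u v : EuclideanSpace ℝ (Fin n)) : ℝ :=
  ∑ i, u i * P.mulVec (fun j => v j) i

/-- Weighted norm `‖u‖_P = √⟪u, u⟫_P`. -/
noncomputable def wnorm {n : ℕ} (P : Matrix (Fin n) (Fin n) ℝ)
    (u : EuclideanSpace ℝ (Fin n)) : ℝ :=
  Real.sqrt (wip P u u)

variable {n : ℕ} (P : Matrix (Fin n) (Fin n) ℝ)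

lemma wip_eq (u v : EuclideanSpace ℝ (Fin n)) :
    wip P u v = dotProduct (fun i => u i) (P.mulVec (fun j => v j)) := rfl

lemma wip_nonneg (hP : P.PosDef) (u : EuclideanSpace ℝ (Fin n)) : 0 ≤ wip P u u := by
  have := hP.posSemidef.re_dotProduct_nonneg (fun i => u i)
  simpa [wip_eq] using this

lemma wip_pos (hP : P.PosDef) {u : EuclideanSpace ℝ (Fin n)} (hu : u ≠ 0) :
    0 < wip P u u := by
  have hne : (fun i => u i) ≠ 0 := by
    intro hc; apply hu; ext i; exact congrFun hc i
  have := hP.re_dotProduct_pos hne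
  simpa [wip_eq] using this

lemma wip_symm (hPs : P.IsSymm) (u v : EuclideanSpace ℝ (Fin n)) :
    wip P u v = wip P v u := by
  simp only [wip_eq]
  rw [Matrix.dotProduct_mulVec, ← Matrix.mulVec_transpose, hPs, dotProduct_comm]

lemma wip_sub_sub (u v : EuclideanSpace ℝ (Fin n)) (t : ℝ) :
    wip P (u - t • v) (u - t • v) =
      wip P u u - t * wip P u v - t * wip P v u + t * t * wip P v v := by
  simp only [wip_eq]
  have h1 : (fun j => (u - t • v) j) = (fun j => u j) - t • (fun j => v j) := rfl
  rw [h1]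
  simp only [Matrix.mulVec_sub, Matrix.mulVec_smul, sub_dotProduct,
    dotProduct_sub, smul_dotProduct, dotProduct_smul, smul_eq_mul]
  ring

lemma wip_add_add (u v : EuclideanSpace ℝ (Fin n)) :
    wip P (u + v) (u + v) = wip P u u + wip P u v + wip P v u + wip P v v := by
  simp only [wip_eq]
  have h1 : (fun j => (u + v) j) = (fun j => u j) + fun j => v j := rfl
  rw [h1]
  simp only [Matrix.mulVec_add, add_dotProduct, dotProduct_add]
  ring

lemma wip_add_right (u v w : EuclideanSpace ℝ (Fin n)) :
    wip P u (v + w) = wip P u v + wip P u w := by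
  simp only [wip_eq]
  have h1 : (fun j => (v + w) j) = (fun j => v j) + fun j => w j := rfl
  rw [h1, Matrix.mulVec_add, dotProduct_add]

lemma wip_smul_right (c : ℝ) (u v : EuclideanSpace ℝ (Fin n)) :
    wip P u (c • v) = c * wip P u v := by
  simp only [wip_eq]
  have h1 : (fun j => (c • v) j) = c • fun j => v j := rfl
  rw [h1, Matrix.mulVec_smul, dotProduct_smul, smul_eq_mul]

lemma wnorm_nonneg (u : EuclideanSpace ℝ (Fin n)) : 0 ≤ wnorm P u := Real.sqrt_nonneg _

lemma wnorm_sq (hP : P.PosDef) (u : EuclideanSpace ℝ (Fin n)) :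
    wnorm P u ^ 2 = wip P u u := Real.sq_sqrt (wip_nonneg P hP u)

lemma wip_neg_neg (u : EuclideanSpace ℝ (Fin n)) : wip P (-u) (-u) = wip P u u := by
  simp only [wip_eq]
  have h1 : (fun j => (-u) j) = -fun j => u j := rfl
  rw [h1, Matrix.mulVec_neg, neg_dotProduct, dotProduct_neg, neg_neg]

lemma wnorm_sub_comm (u v : EuclideanSpace ℝ (Fin n)) :
    wnorm P (u - v) = wnorm P (v - u) := by
  unfold wnorm
  rw [← neg_sub v u, wip_neg_neg]

lemma wip_le_wnorm_mul (hPs : P.IsSymm) (hP : P.PosDef) (u v : EuclideanSpace ℝ (Fin n)) :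
    wip P u v ≤ wnorm P u * wnorm P v := by
  have h2 : wip P u v ^ 2 ≤ wip P u u * wip P v v := by
    by_cases hv : v = 0
    · subst hv
      have h0 : wip P u 0 = 0 := by
        simp only [wip_eq]
        have h1 : (fun j => (0 : EuclideanSpace ℝ (Fin n)) j) = (0 : Fin n → ℝ) := rfl
        rw [h1, Matrix.mulVec_zero, dotProduct_zero]
      have h00 : wip P (0 : EuclideanSpace ℝ (Fin n)) 0 = 0 := by
        simp only [wip_eq]
        have h1 : (fun j => (0 : EuclideanSpace ℝ (Fin n)) j) = (0 : Fin n → ℝ) := rfl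
        rw [h1, Matrix.mulVec_zero, dotProduct_zero]
      rw [h0, h00]
      norm_num
    · have hq : 0 < wip P v v := wip_pos P hP hv
      set t : ℝ := wip P u v / wip P v v with htdef
      have h0 : 0 ≤ wip P (u - t • v) (u - t • v) := wip_nonneg P hP _
      rw [wip_sub_sub, wip_symm P hPs v u] at h0
      have ht : t * wip P v v = wip P u v := div_mul_cancel₀ _ hq.ne'
      nlinarith [h0, ht, hq]
  calc wip P u v ≤ |wip P u v| := le_abs_self _
    _ = Real.sqrt ((wip P u v) ^ 2) := (Real.sqrt_sq_eq_abs _).symm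
    _ ≤ Real.sqrt (wip P u u * wip P v v) := Real.sqrt_le_sqrt h2
    _ = wnorm P u * wnorm P v := Real.sqrt_mul (wip_nonneg P hP u) _

lemma wnorm_add_le (hPs : P.IsSymm) (hP : P.PosDef) (u v : EuclideanSpace ℝ (Fin n)) :
    wnorm P (u + v) ≤ wnorm P u + wnorm P v := by
  have hcs := wip_le_wnorm_mul P hPs hP u v
  have hu := wnorm_sq P hP u
  have hv := wnorm_sq P hP v
  have h2 : wip P (u + v) (u + v) ≤ (wnorm P u + wnorm P v) ^ 2 := by
    rw [wip_add_add, wip_symm P hPs v u]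
    nlinarith
  calc wnorm P (u + v) = Real.sqrt (wip P (u + v) (u + v)) := rfl
    _ ≤ Real.sqrt ((wnorm P u + wnorm P v) ^ 2) := Real.sqrt_le_sqrt h2
    _ = wnorm P u + wnorm P v := Real.sqrt_sq (add_nonneg (wnorm_nonneg P u) (wnorm_nonneg P v))


theorem stmt_5 {n : ℕ} (P : Matrix (Fin n) (Fin n) ℝ)
    (hPsymm : P.IsSymm) (hPpos : P.PosDef)
    (g : EuclideanSpace ℝ (Fin n) → ℝ → EuclideanSpace ℝ (Fin n))
    (γ : ℝ) (hγ : 0 < γ)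
    (hOSL : ∀ x y : EuclideanSpace ℝ (Fin n), ∀ t : ℝ, 0 ≤ t →
      wip P (x - y) (g x t - g y t) ≤ -γ * (wnorm P (x - y)) ^ 2)
    (h : ℝ) (hh : 0 < h)
    (xs : ℝ → EuclideanSpace ℝ (Fin n)) (hxs : ∀ t : ℝ, 0 ≤ t → g (xs t) t = 0)
    (ρ : ℝ) (hρ : 0 ≤ ρ)
    (hxsmove : ∀ k : ℕ, 1 ≤ k →
      wnorm P (xs ((k : ℝ) * h) - xs (((k : ℝ) - 1) * h)) ≤ ρ)
    (y : ℕ → EuclideanSpace ℝ (Fin n))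
    (hy : ∀ k : ℕ, y (k + 1) = y k + h • g (y (k + 1)) (((k : ℝ) + 1) * h)) :
    (∀ k : ℕ, 1 ≤ k →
      wnorm P (y k - xs ((k : ℝ) * h)) ≤
        (1 + h * γ) ^ (-(k : ℤ)) * wnorm P (y 0 - xs 0) +
          ρ * ∑ m ∈ Finset.Icc 1 k, (1 + h * γ) ^ (-(m : ℤ))) ∧
    limsup (fun k : ℕ => wnorm P (y k - xs ((k : ℝ) * h))) atTop ≤ ρ / (h * γ) := by
  have h1γ : (1:ℝ) < 1 + h * γ := by nlinarith
  have hpos : (0:ℝ) < 1 + h * γ := by linarith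
  set r : ℝ := (1 + h * γ)⁻¹ with hrdef
  have hr0 : 0 < r := inv_pos.mpr hpos
  have hr1 : r < 1 := by rw [hrdef]; exact inv_lt_one_of_one_lt₀ h1γ
  -- one-step contraction
  have step : ∀ k : ℕ, wnorm P (y (k + 1) - xs ((((k : ℕ) + 1 : ℕ) : ℝ) * h)) ≤
      r * (wnorm P (y k - xs ((k : ℝ) * h)) + ρ) := by
    intro k
    set t : ℝ := ((k : ℝ) + 1) * h with htdef
    have ht0 : (0:ℝ) ≤ t := by positivity
    have hcast : (((k : ℕ) + 1 : ℕ) : ℝ) * h = t := by push_cast; rw [htdef]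
    rw [hcast]
    set d : EuclideanSpace ℝ (Fin n) := y (k + 1) - xs t with hddef
    have hgz : g (xs t) t = 0 := hxs t ht0
    have hd : d = (y k - xs t) + h • (g (y (k + 1)) t - g (xs t) t) := by
      rw [hgz, sub_zero, hddef]
      conv_lhs => rw [hy k, ← htdef]
      abel
    have e1 : wip P d d = wip P d (y k - xs t)
        + h * wip P d (g (y (k + 1)) t - g (xs t) t) := by
      conv_lhs => rw [hd]
      rw [wip_add_right, wip_smul_right, ← hd]
    have hOS : wip P d (g (y (k + 1)) t - g (xs t) t) ≤ -γ * wnorm P d ^ 2 := by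
      rw [hddef]
      exact hOSL (y (k + 1)) (xs t) t ht0
    have hcs := wip_le_wnorm_mul P hPsymm hPpos d (y k - xs t)
    have hsq := wnorm_sq P hPpos d
    have hD : (1 + h * γ) * wnorm P d ^ 2 ≤ wnorm P d * wnorm P (y k - xs t) := by
      nlinarith [mul_le_mul_of_nonneg_left hOS hh.le]
    have hDle : wnorm P d ≤ r * wnorm P (y k - xs t) := by
      rcases eq_or_lt_of_le (wnorm_nonneg P d) with h0 | h0
      · rw [← h0]
        have := wnorm_nonneg P (y k - xs t)
        positivity
      · rw [hrdef, inv_mul_eq_div, le_div_iff₀ hpos]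
        nlinarith [hD, h0]
    have hA : wnorm P (y k - xs t) ≤ wnorm P (y k - xs ((k : ℝ) * h)) + ρ := by
      have hm := hxsmove (k + 1) (Nat.le_add_left 1 k)
      have e2 : (((k + 1 : ℕ)) : ℝ) * h = t := by push_cast; rw [htdef]
      have e3 : ((((k + 1 : ℕ)) : ℝ) - 1) * h = (k : ℝ) * h := by push_cast; ring
      rw [e2, e3] at hm
      rw [wnorm_sub_comm P (xs t) (xs ((k : ℝ) * h))] at hm
      have hEq : y k - xs t = (y k - xs ((k : ℝ) * h)) + (xs ((k : ℝ) * h) - xs t) := by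
        abel
      rw [hEq]
      have htri := wnorm_add_le P hPsymm hPpos (y k - xs ((k : ℝ) * h))
        (xs ((k : ℝ) * h) - xs t)
      linarith
    calc wnorm P d ≤ r * wnorm P (y k - xs t) := hDle
      _ ≤ r * (wnorm P (y k - xs ((k : ℝ) * h)) + ρ) :=
          mul_le_mul_of_nonneg_left hA hr0.le
  -- geometric sums
  set S : ℕ → ℝ := fun k => ∑ i ∈ Finset.range k, r ^ (i + 1) with hSdef
  have hSrec : ∀ k : ℕ, S (k + 1) = r * S k + r := by
    intro k
    have h1 : S (k + 1) = (∑ i ∈ Finset.range k, r ^ (i + 1 + 1)) + r ^ (0 + 1) :=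
      Finset.sum_range_succ' _ k
    have h2 : ∑ i ∈ Finset.range k, r ^ (i + 1 + 1) = r * S k := by
      rw [hSdef, Finset.mul_sum]
      refine Finset.sum_congr rfl fun i _ => ?_
      ring
    rw [h1, h2]; ring
  have hSIcc : ∀ k : ℕ, (∑ m ∈ Finset.Icc 1 k, r ^ m) = S k := by
    intro k
    rw [← Finset.Ico_add_one_right_eq_Icc, Finset.sum_Ico_eq_sum_range]
    simp [hSdef, add_comm]
  -- inductive bound
  have bound : ∀ k : ℕ, wnorm P (y k - xs ((k : ℝ) * h)) ≤
      r ^ k * wnorm P (y 0 - xs 0) + ρ * S k := by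
    intro k
    induction k with
    | zero => simp [hSdef]
    | succ k ih =>
      have h3 : wnorm P (y k - xs ((k : ℝ) * h)) + ρ ≤
          r ^ k * wnorm P (y 0 - xs 0) + ρ * S k + ρ := by linarith
      calc wnorm P (y (k + 1) - xs ((((k : ℕ) + 1 : ℕ) : ℝ) * h))
          ≤ r * (wnorm P (y k - xs ((k : ℝ) * h)) + ρ) := step k
        _ ≤ r * (r ^ k * wnorm P (y 0 - xs 0) + ρ * S k + ρ) :=
            mul_le_mul_of_nonneg_left h3 hr0.le
        _ = r ^ (k + 1) * wnorm P (y 0 - xs 0) + ρ * (r * S k + r) := by ring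
        _ = r ^ (k + 1) * wnorm P (y 0 - xs 0) + ρ * S (k + 1) := by rw [hSrec k]
  have hzp : ∀ m : ℕ, (1 + h * γ) ^ (-(m : ℤ)) = r ^ m := by
    intro m
    rw [zpow_neg, zpow_natCast, ← inv_pow]
  constructor
  · intro k _
    rw [hzp k]
    have : (∑ m ∈ Finset.Icc 1 k, (1 + h * γ) ^ (-(m : ℤ))) = ∑ m ∈ Finset.Icc 1 k, r ^ m :=
      Finset.sum_congr rfl fun m _ => hzp m
    rw [this, hSIcc k]
    exact bound k
  · -- limsup
    have hgeom : HasSum (fun i : ℕ => r ^ (i + 1)) (r * (1 - r)⁻¹) := by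
      have := (hasSum_geometric_of_lt_one hr0.le hr1).mul_left r
      have heq : (fun i : ℕ => r * r ^ i) = fun i : ℕ => r ^ (i + 1) := by
        funext i; rw [pow_succ]; ring
      rwa [heq] at this
    have htend : Tendsto (fun k : ℕ => r ^ k * wnorm P (y 0 - xs 0) + ρ * S k) atTop
        (nhds (0 * wnorm P (y 0 - xs 0) + ρ * (r * (1 - r)⁻¹))) := by
      apply Tendsto.add
      · exact (tendsto_pow_atTop_nhds_zero_of_lt_one hr0.le hr1).mul_const _
      · exact hgeom.tendsto_sum_nat.const_mul ρ
    have hval : 0 * wnorm P (y 0 - xs 0) + ρ * (r * (1 - r)⁻¹) = ρ / (h * γ) := by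
      rw [hrdef]
      have h1 : (1 : ℝ) - (1 + h * γ)⁻¹ = (h * γ) / (1 + h * γ) := by
        field_simp
        ring
      rw [h1]
      have hhγ : h * γ ≠ 0 := by positivity
      field_simp
      ring
    rw [hval] at htend
    have hcob : IsCoboundedUnder (· ≤ ·) atTop
        (fun k : ℕ => wnorm P (y k - xs ((k : ℝ) * h))) :=
      isCoboundedUnder_le_of_eventually_le atTop
        (Eventually.of_forall fun k => wnorm_nonneg P _)
    have hbdd := htend.isBoundedUnder_le
    calc limsup (fun k : ℕ => wnorm P (y k - xs ((k : ℝ) * h))) atTop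
        ≤ limsup (fun k : ℕ => r ^ k * wnorm P (y 0 - xs 0) + ρ * S k) atTop :=
          limsup_le_limsup (Eventually.of_forall bound) hcob hbdd
      _ = ρ / (h * γ) := htend.limsup_eq
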